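/- arXiv:1606.06684 — 4 statements merged into one kernel-verified Lean document; each statement's English description precedes it below -/
import Mathlib

section
/- Let N_j ≥ 2, B_j ⊆ {0,...,N_j−1} nonempty, and c = sup_j (max B_j)/N_j. Let E = { ∑_{j≥1} b_j/(N_1⋯N_j) : b_j ∈ B_j }, and for k ≥ 1 set n_k = N_1⋯N_k. Then every element of n_k·E (reduced mod 1) lies in [0, 2c]. -/
open Finset in
theorem moran_scaled_mod_one_subset
    (N : ℕ → ℕ) (B : ℕ → Finset ℕ)
    (hN : ∀ j, 2 ≤ N j)
    (hBne : ∀ j, (B j).Nonempty)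
    (hB : ∀ j, B j ⊆ Finset.range (N j))
    (c : ℝ)
    (hc : c = ⨆ j : ℕ, ((B j).max' (hBne j) : ℝ) / (N j : ℝ)) :
    ∀ x ∈ {x : ℝ | ∃ b : ℕ → ℕ, (∀ j, b j ∈ B j) ∧
      x = ∑' j : ℕ, (b j : ℝ) / ∏ i ∈ Finset.range (j + 1), (N i : ℝ)},
    ∀ k : ℕ, 1 ≤ k →
      Int.fract ((∏ i ∈ Finset.range k, (N i : ℝ)) * x) ∈ Set.Icc 0 (2 * c) := by
  rintro x ⟨b, hb, rfl⟩ k hk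
  have hNpos : ∀ i, (0:ℝ) < (N i : ℝ) := fun i => by
    exact_mod_cast Nat.lt_of_lt_of_le two_pos (hN i)
  have hN2 : ∀ i, (2:ℝ) ≤ (N i : ℝ) := fun i => by exact_mod_cast hN i
  have hPpos : ∀ m, (0:ℝ) < ∏ i ∈ Finset.range m, (N i : ℝ) :=
    fun m => Finset.prod_pos fun i _ => hNpos i
  have hgeo : ∀ m, (2:ℝ)^m ≤ ∏ i ∈ Finset.range m, (N i : ℝ) := by
    intro m
    calc (2:ℝ)^m = ∏ _i ∈ Finset.range m, (2:ℝ) := by simp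
    _ ≤ _ := Finset.prod_le_prod (fun i _ => by norm_num) (fun i _ => hN2 i)
  have hbN : ∀ j, (b j : ℝ) ≤ N j := fun j => by
    exact_mod_cast (Finset.mem_range.mp (hB j (hb j))).le
  -- c bounds
  have hratio : ∀ j, ((B j).max' (hBne j) : ℝ) / (N j : ℝ) ≤ 1 := by
    intro j
    rw [div_le_one (hNpos j)]
    exact_mod_cast (Finset.mem_range.mp (hB j ((B j).max'_mem (hBne j)))).le
  have hcj : ∀ j, ((B j).max' (hBne j) : ℝ) / (N j : ℝ) ≤ c := by
    intro j; rw [hc]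
    exact le_ciSup ⟨1, Set.forall_mem_range.mpr hratio⟩ j
  have hc0 : (0:ℝ) ≤ c := le_trans (by positivity) (hcj 0)
  have hbc : ∀ j, (b j : ℝ) ≤ c * N j := by
    intro j
    have h1 : (b j : ℝ) ≤ ((B j).max' (hBne j) : ℝ) := by
      exact_mod_cast Finset.le_max' _ _ (hb j)
    have h2 := (div_le_iff₀ (hNpos j)).mp (hcj j)
    linarith
  -- summability
  have hsum : Summable (fun j => (b j : ℝ) / ∏ i ∈ Finset.range (j+1), (N i:ℝ)) := by
    have hle : ∀ j, (b j : ℝ) / ∏ i ∈ Finset.range (j+1), (N i:ℝ) ≤ ((1:ℝ)/2)^j := by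
      intro j
      rw [Finset.prod_range_succ]
      calc (b j:ℝ) / ((∏ i ∈ Finset.range j, (N i:ℝ)) * N j)
          ≤ (N j:ℝ) / ((∏ i ∈ Finset.range j, (N i:ℝ)) * N j) := by
            gcongr; exact (Finset.mem_range.mp (hB j (hb j))).le
        _ = 1 / ∏ i ∈ Finset.range j, (N i:ℝ) := by
            rw [mul_comm, ← div_div, div_self (hNpos j).ne']
        _ ≤ 1 / (2:ℝ)^j := by
            exact one_div_le_one_div_of_le (by positivity) (hgeo j)
        _ = ((1:ℝ)/2)^j := by rw [one_div_pow]
    exact Summable.of_nonneg_of_le (fun j => by positivity) hle summable_geometric_two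
  -- split the series
  have hsplit := Summable.sum_add_tsum_nat_add k hsum
  set t : ℕ → ℝ := fun i => (b (i+k) : ℝ) / ∏ i' ∈ Finset.Ico k (i+k+1), (N i':ℝ) with ht
  have hIcopos : ∀ i, (0:ℝ) < ∏ i' ∈ Finset.Ico k (i+k+1), (N i':ℝ) := by
    intro i; exact Finset.prod_pos fun i' _ => hNpos i'
  have htail : ∀ i, (∏ i' ∈ Finset.range k, (N i':ℝ)) *
      ((b (i+k) : ℝ) / ∏ i' ∈ Finset.range (i+k+1), (N i':ℝ)) = t i := by
    intro i
    have hle : k ≤ i+k+1 := by omega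
    rw [← Finset.prod_range_mul_prod_Ico (fun i' => (N i':ℝ)) hle]
    rw [ht, mul_div_assoc', mul_div_mul_left _ _ (hPpos k).ne']
  -- the front is an integer
  set n : ℕ := ∑ j ∈ Finset.range k, b j * ∏ i ∈ Finset.Ico (j+1) k, N i with hn
  have hfront : (∏ i' ∈ Finset.range k, (N i':ℝ)) *
      (∑ j ∈ Finset.range k, (b j : ℝ) / ∏ i ∈ Finset.range (j+1), (N i:ℝ)) = (n : ℝ) := by
    rw [Finset.mul_sum, hn]
    push_cast
    apply Finset.sum_congr rfl
    intro j hj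
    have hle : j+1 ≤ k := Finset.mem_range.mp hj
    rw [← Finset.prod_range_mul_prod_Ico (fun i' => (N i':ℝ)) hle,
      mul_comm (∏ i' ∈ Finset.range (j+1), (N i':ℝ)) _, mul_assoc, mul_div_assoc',
      mul_div_cancel_left₀ _ (hPpos (j+1)).ne', mul_comm]
  -- summability of the tail and bounds
  have hQ : ∀ i, (2:ℝ)^i * (N (i+k):ℝ) ≤ ∏ i' ∈ Finset.Ico k (i+k+1), (N i':ℝ) := by
    intro i
    rw [Finset.prod_Ico_succ_top (by omega : k ≤ i+k)]
    refine mul_le_mul_of_nonneg_right ?_ (hNpos _).le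
    calc (2:ℝ)^i = ∏ _i' ∈ Finset.Ico k (i+k), (2:ℝ) := by
          rw [Finset.prod_const, Nat.card_Ico]; congr 1; omega
      _ ≤ _ := Finset.prod_le_prod (fun i' _ => by norm_num) (fun i' _ => hN2 i')
  have htb : ∀ i, t i ≤ c * ((1:ℝ)/2)^i := by
    intro i
    have h1 : t i ≤ (c * N (i+k)) / ((2:ℝ)^i * (N (i+k):ℝ)) := by
      rw [ht]
      exact div_le_div₀ (mul_nonneg hc0 (hNpos _).le) (hbc (i+k)) (mul_pos (by positivity) (hNpos _)) (hQ i)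
    calc t i ≤ (c * N (i+k)) / ((2:ℝ)^i * (N (i+k):ℝ)) := h1
      _ = c * ((1:ℝ)/2)^i := by
          rw [mul_div_mul_right _ _ (hNpos (i+k)).ne', one_div_pow, mul_one_div]
  have htnonneg : ∀ i, 0 ≤ t i := fun i => by
    rw [ht]; positivity
  have htsum : Summable t :=
    Summable.of_nonneg_of_le htnonneg htb (summable_geometric_two.mul_left c)
  have hT2c : ∑' i, t i ≤ 2 * c := by
    calc ∑' i, t i ≤ ∑' i, c * ((1:ℝ)/2)^i :=
          Summable.tsum_le_tsum htb htsum (summable_geometric_two.mul_left c)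
      _ = c * 2 := by rw [tsum_mul_left, tsum_geometric_two]
      _ = 2 * c := by ring
  have hT0 : 0 ≤ ∑' i, t i := tsum_nonneg htnonneg
  -- combine
  have hmain : (∏ i ∈ Finset.range k, (N i : ℝ)) *
      (∑' j, (b j : ℝ) / ∏ i ∈ Finset.range (j+1), (N i:ℝ)) = (n:ℝ) + ∑' i, t i := by
    rw [← hsplit, mul_add, hfront]
    congr 1
    rw [← tsum_mul_left]
    exact tsum_congr htail
  rw [hmain]
  have hfract : Int.fract ((n:ℝ) + ∑' i, t i) = Int.fract (∑' i, t i) := by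
    rw [← Int.cast_natCast, Int.fract_intCast_add]
  rw [hfract]
  constructor
  · exact Int.fract_nonneg _
  · by_cases hT1 : ∑' i, t i < 1
    · rw [Int.fract_eq_self.mpr ⟨hT0, hT1⟩]
      exact hT2c
    · have := Int.fract_lt_one (∑' i, t i)
      push_neg at hT1
      linarith
end

section
/- Let N_j ≥ 3, B_j = {0,...,K_j−1} with 0 < K_j < N_j, and suppose c = sup_j K_j/N_j < √6/π. Let μ be the infinite convolution μ = ν_1 ∗ ν_2 ∗ ⋯ where ν_n = (1/K_n) ∑_{j=0}^{K_n−1} δ_{j/(N_1⋯N_n)}. Then inf_n |μ̂(N_1⋯N_n)| > 0; in particular limsup_{n→∞} |μ̂(n)| > 0, so μ̂ does not tend to zero at infinity. -/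
open Real Finset

-- sum of j
lemma mr_sum_id (K : ℕ) : ∑ j ∈ range K, (j:ℝ) = K*(K-1)/2 := by
  induction K with
  | zero => simp
  | succ n ih => rw [Finset.sum_range_succ, ih]; push_cast; ring

lemma mr_sum_sq (K : ℕ) : ∑ j ∈ range K, (j:ℝ)^2 = K*(K-1)*(2*K-1)/6 := by
  induction K with
  | zero => simp
  | succ n ih => rw [Finset.sum_range_succ, ih]; push_cast; ring

lemma mr_sum_centered (K : ℕ) :
    ∑ j ∈ range K, ((K:ℝ) - 1 - 2*j)^2 = K*((K:ℝ)^2-1)/3 := by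
  have : ∀ j ∈ range K, ((K:ℝ) - 1 - 2*j)^2
      = ((K:ℝ)-1)^2 - (4*((K:ℝ)-1))*(j:ℝ) + 4*(j:ℝ)^2 := by intros; ring
  rw [Finset.sum_congr rfl this]
  simp only [Finset.sum_add_distrib, Finset.sum_sub_distrib, ← Finset.mul_sum,
    Finset.sum_const, card_range, nsmul_eq_mul, mr_sum_id, mr_sum_sq]
  ring

lemma mr_key (K : ℕ) (t : ℝ) :
    (K:ℝ) * (1 - π^2*((K:ℝ)*t)^2/6)
      ≤ ‖∑ j ∈ range K, Complex.exp ((-(2*π*((j:ℝ)*t)) : ℝ) * Complex.I)‖ := by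
  set S := ∑ j ∈ range K, Complex.exp ((-(2*π*((j:ℝ)*t)) : ℝ) * Complex.I) with hS
  set φ : ℝ := π*((K:ℝ)-1)*t with hφ
  have h1 : ‖S‖ = ‖Complex.exp ((φ:ℂ) * Complex.I) * S‖ := by
    rw [norm_mul, Complex.norm_exp_ofReal_mul_I, one_mul]
  have h3 : (Complex.exp ((φ:ℂ)*Complex.I) * S).re
      = ∑ j ∈ range K, Real.cos (π*t*((K:ℝ)-1-2*j)) := by
    rw [hS, Finset.mul_sum, Complex.re_sum]
    refine Finset.sum_congr rfl fun j hj => ?_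
    rw [← Complex.exp_add]
    have : (φ:ℂ)*Complex.I + (-(2*π*((j:ℝ)*t)) : ℝ) * Complex.I
        = ((π*t*((K:ℝ)-1-2*j) : ℝ) : ℂ) * Complex.I := by
      rw [hφ]
      simp only [Complex.ofReal_sub, Complex.ofReal_mul, Complex.ofReal_neg,
        Complex.ofReal_one, Complex.ofReal_ofNat, Complex.ofReal_natCast]
      ring
    rw [this, Complex.exp_ofReal_mul_I_re]
  have h4 : (K:ℝ) * (1 - π^2*((K:ℝ)*t)^2/6)
      ≤ ∑ j ∈ range K, Real.cos (π*t*((K:ℝ)-1-2*j)) := by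
    have hb : ∀ j ∈ range K, 1 - (π*t*((K:ℝ)-1-2*j))^2/2 ≤ Real.cos (π*t*((K:ℝ)-1-2*j)) :=
      fun j _ => Real.one_sub_sq_div_two_le_cos
    calc (K:ℝ) * (1 - π^2*((K:ℝ)*t)^2/6)
        ≤ ∑ j ∈ range K, (1 - (π*t*((K:ℝ)-1-2*j))^2/2) := by
          have hexp : ∀ j ∈ range K, (1 - (π*t*((K:ℝ)-1-2*j))^2/2)
              = 1 - (π*t)^2/2 * (((K:ℝ)-1-2*j)^2) := by intros; ring
          rw [Finset.sum_congr rfl hexp, Finset.sum_sub_distrib, ← Finset.mul_sum,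
            Finset.sum_const, card_range, nsmul_eq_mul, mul_one, mr_sum_centered]
          have hsq : (π*t)^2/2 * ((K:ℝ)*((K:ℝ)^2-1)/3) ≤ π^2*t^2*(K:ℝ)^3/6 := by
            have hK0 : (0:ℝ) ≤ (K:ℝ) := Nat.cast_nonneg K
            nlinarith [sq_nonneg (π*t), sq_nonneg (π*t*(K:ℝ))]
          nlinarith []
        _ ≤ _ := Finset.sum_le_sum hb
  calc (K:ℝ) * (1 - π^2*((K:ℝ)*t)^2/6) ≤ (Complex.exp ((φ:ℂ)*Complex.I) * S).re := by
        rw [h3]; exact h4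
    _ ≤ ‖Complex.exp ((φ:ℂ)*Complex.I) * S‖ := Complex.re_le_norm _
    _ = ‖S‖ := h1.symm

lemma mr_weier (s : Finset ℕ) (a : ℕ → ℝ) (h0 : ∀ m ∈ s, 0 ≤ a m) (h1 : ∀ m ∈ s, a m ≤ 1) :
    1 - ∑ m ∈ s, a m ≤ ∏ m ∈ s, (1 - a m) := by
  classical
  induction s using Finset.induction_on with
  | empty => simp
  | @insert x t hx ih =>
    rw [Finset.sum_insert hx, Finset.prod_insert hx]
    have h0' : ∀ m ∈ t, 0 ≤ a m := fun m hm => h0 m (Finset.mem_insert_of_mem hm)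
    have h1' : ∀ m ∈ t, a m ≤ 1 := fun m hm => h1 m (Finset.mem_insert_of_mem hm)
    have ih' := ih h0' h1'
    have hax0 : 0 ≤ a x := h0 x (Finset.mem_insert_self x t)
    have hax1 : a x ≤ 1 := h1 x (Finset.mem_insert_self x t)
    have hsum0 : 0 ≤ ∑ m ∈ t, a m := Finset.sum_nonneg h0'
    nlinarith [ih']

set_option maxHeartbeats 2000000 in
lemma mr_main (N K : ℕ → ℕ) (hN : ∀ j, 3 ≤ N j) (hK : ∀ j, 0 < K j) (hKN : ∀ j, K j < N j)
    (c : ℝ) (hcb : ∀ j, (K j:ℝ)/(N j) ≤ c) (hc1 : c ≤ 1) (hc0 : 0 ≤ c)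
    (hπc : π^2*c^2/6 < 1) (n : ℕ) (ξ : ℝ) (hξ : ξ = ∏ i ∈ Finset.range (n+1), (N i : ℝ)) :
    (1 - π^2*c^2/6) * (1 - π^2/48) ≤ ‖∏' m : ℕ, ((K m : ℂ))⁻¹ * ∑ j ∈ Finset.range (K m),
        Complex.exp (-(2 * π * ξ * ((j : ℝ) /
          ∏ i ∈ Finset.range (m + 1), (N i : ℝ))) * Complex.I)‖ := by
  have hπ48 : π^2/48 < 1 := by nlinarith [Real.pi_lt_d2, Real.pi_pos]
  set δ : ℝ := (1 - π^2*c^2/6) * (1 - π^2/48) with hδdef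
  have hδpos : 0 < δ := by apply mul_pos <;> linarith
  have hδ1 : δ ≤ 1 := by
    have h2 : 0 ≤ π^2*c^2/6 := by positivity
    have h3 : 0 ≤ π^2/48 := by positivity
    nlinarith
  have hNpos : ∀ i, (0:ℝ) < (N i : ℝ) := fun i => by
    exact_mod_cast lt_of_lt_of_le (by norm_num) (hN i)
  have hPpos : ∀ r, (0:ℝ) < ∏ i ∈ Finset.range r, (N i : ℝ) :=
    fun r => Finset.prod_pos (fun i _ => hNpos i)
  set g : ℕ → ℂ := fun m => ((K m : ℂ))⁻¹ * ∑ j ∈ Finset.range (K m),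
        Complex.exp (-(2 * π * ξ * ((j : ℝ) /
          ∏ i ∈ Finset.range (m + 1), (N i : ℝ))) * Complex.I) with hgdef
  -- clean form of the factors
  have hg2 : ∀ m, g m = ((K m : ℂ))⁻¹ * ∑ j ∈ Finset.range (K m),
      Complex.exp ((-(2*π*((j:ℝ) * (ξ / ∏ i ∈ Finset.range (m+1), (N i:ℝ)))) : ℝ)
        * Complex.I) := by
    intro m
    rw [hgdef]
    refine congrArg _ (Finset.sum_congr rfl fun j _ => congrArg Complex.exp ?_)
    push_cast
    ring
  -- (A): g m = 1 for m ≤ n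
  have hA : ∀ m, m ≤ n → g m = 1 := by
    intro m hm
    have ht : ξ / (∏ i ∈ Finset.range (m+1), (N i:ℝ))
        = ((∏ i ∈ Finset.Ico (m+1) (n+1), N i : ℕ) : ℝ) := by
      have hsp := Finset.prod_range_mul_prod_Ico (fun i => (N i:ℝ)) (show m+1 ≤ n+1 by omega)
      rw [hξ, ← hsp, Nat.cast_prod, mul_comm, mul_div_assoc, div_self (hPpos (m+1)).ne',
        mul_one]
    rw [hg2]
    have hexp1 : ∀ j ∈ Finset.range (K m),
        Complex.exp ((-(2*π*((j:ℝ) * (ξ / ∏ i ∈ Finset.range (m+1), (N i:ℝ)))) : ℝ)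
          * Complex.I) = 1 := by
      intro j hj
      rw [ht]
      have h3 : ((-(2*π*((j:ℝ) * ((∏ i ∈ Finset.Ico (m+1) (n+1), N i : ℕ) : ℝ))) : ℝ) : ℂ)
            * Complex.I
          = (((-(j * ∏ i ∈ Finset.Ico (m+1) (n+1), N i : ℤ)) : ℤ) : ℂ)
            * (2*(π:ℂ)*Complex.I) := by
        push_cast
        ring
      rw [h3, Complex.exp_int_mul_two_pi_mul_I]

    rw [Finset.sum_congr rfl hexp1, Finset.sum_const, Finset.card_range, nsmul_eq_mul, mul_one]
    exact inv_mul_cancel₀ (Nat.cast_ne_zero.2 (hK m).ne')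
  -- (B): per-factor abs lower bound for m ≥ n+1
  have hB : ∀ m, n+1 ≤ m →
      1 - π^2*c^2/6 * ((1/9:ℝ))^(m-n-1) ≤ ‖g m‖ := by
    intro m hm
    set t : ℝ := ξ / ∏ i ∈ Finset.range (m+1), (N i:ℝ) with htdef
    -- bound on K m * t
    have hD : (3:ℝ)^(m-n-1) ≤ ∏ i ∈ Finset.Ico (n+1) m, (N i:ℝ) := by
      calc (3:ℝ)^(m-n-1) = ∏ _i ∈ Finset.Ico (n+1) m, (3:ℝ) := by
            rw [Finset.prod_const, Nat.card_Ico, Nat.sub_sub]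
        _ ≤ _ := Finset.prod_le_prod (fun i _ => by norm_num)
            (fun i _ => by exact_mod_cast hN i)
    have hDpos : (0:ℝ) < ∏ i ∈ Finset.Ico (n+1) m, (N i:ℝ) :=
      Finset.prod_pos fun i _ => hNpos i
    have hsplit : (∏ i ∈ Finset.range (m+1), (N i:ℝ))
        = (∏ i ∈ Finset.range (n+1), (N i:ℝ)) *
          ((∏ i ∈ Finset.Ico (n+1) m, (N i:ℝ)) * (N m:ℝ)) := by
      rw [← Finset.prod_range_mul_prod_Ico (fun i => (N i:ℝ)) (show n+1 ≤ m+1 by omega),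
        ← Finset.prod_Ico_succ_top (show n+1 ≤ m by omega)]
    have ht0 : 0 ≤ t := le_of_lt (div_pos (hξ ▸ hPpos (n+1)) (hPpos (m+1)))
    have hKt : (K m:ℝ) * t ≤ c * (1/3:ℝ)^(m-n-1) := by
      have heq : (K m:ℝ) * t = ((K m:ℝ)/(N m:ℝ)) / (∏ i ∈ Finset.Ico (n+1) m, (N i:ℝ)) := by
        rw [htdef, hξ, hsplit, div_mul_cancel_left₀ (hPpos (n+1)).ne', div_div,
          div_eq_mul_inv, mul_inv]
        ring
      rw [heq]
      have h1 : ((K m:ℝ)/(N m:ℝ)) / (∏ i ∈ Finset.Ico (n+1) m, (N i:ℝ))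
          ≤ c / (3:ℝ)^(m-n-1) :=
        div_le_div₀ hc0 (hcb m) (by positivity) hD
      have h2 : c / (3:ℝ)^(m-n-1) = c * (1/3:ℝ)^(m-n-1) := by
        rw [one_div, inv_pow, div_eq_mul_inv]
      linarith
    -- apply the key estimate
    have hkey := mr_key (K m) t
    have habsg : ‖g m‖ = ((K m:ℝ))⁻¹ *
        ‖∑ j ∈ Finset.range (K m),
          Complex.exp ((-(2*π*((j:ℝ)*t)) : ℝ) * Complex.I)‖ := by
      rw [hg2, norm_mul, norm_inv, Complex.norm_natCast]
    have hKpos : (0:ℝ) < (K m:ℝ) := by exact_mod_cast hK m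
    have hstep : 1 - π^2*((K m:ℝ)*t)^2/6 ≤ ‖g m‖ := by
      rw [habsg]
      calc (1 : ℝ) - π^2*((K m:ℝ)*t)^2/6
          = ((K m:ℝ))⁻¹ * ((K m:ℝ) * (1 - π^2*((K m:ℝ)*t)^2/6)) := by
            field_simp
        _ ≤ _ := by
            apply mul_le_mul_of_nonneg_left (mr_key (K m) t)
              (le_of_lt (inv_pos.2 hKpos))
    have hpow : ((K m:ℝ)*t)^2 ≤ c^2 * (1/9:ℝ)^(m-n-1) := by
      have h9 : ((1/3:ℝ)^(m-n-1))^2 = (1/9:ℝ)^(m-n-1) := by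
        rw [← pow_mul, mul_comm, pow_mul]
        norm_num
      have hKt0 : 0 ≤ (K m:ℝ)*t := mul_nonneg (le_of_lt hKpos) ht0
      calc ((K m:ℝ)*t)^2 ≤ (c * (1/3:ℝ)^(m-n-1))^2 := pow_le_pow_left₀ hKt0 hKt 2
        _ = c^2 * (1/9:ℝ)^(m-n-1) := by rw [mul_pow, h9]
    refine le_trans ?_ hstep
    nlinarith [mul_le_mul_of_nonneg_left hpow (show (0:ℝ) ≤ π^2/6 by positivity)]
  -- uniform bound for finite partial products
  have hfac : ∀ s : Finset ℕ, δ ≤ ‖∏ m ∈ s, g m‖ := by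
    classical
    intro s
    rw [norm_prod]
    rw [← Finset.prod_filter_mul_prod_filter_not s (fun m => m ≤ n)]
    have h1 : ∏ m ∈ s.filter (fun m => m ≤ n), ‖g m‖ = 1 :=
      Finset.prod_eq_one fun m hm => by rw [hA m (Finset.mem_filter.mp hm).2, norm_one]
    rw [h1, one_mul]
    set s2 := s.filter (fun m => ¬ m ≤ n) with hs2
    rw [← Finset.prod_filter_mul_prod_filter_not s2 (fun m => m = n+1)]
    have hApart : 1 - π^2*c^2/6 ≤ ∏ m ∈ s2.filter (fun m => m = n+1), ‖g m‖ := by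
      have hsub : s2.filter (fun m => m = n+1) ⊆ {n+1} := fun m hm => by
        have := (Finset.mem_filter.mp hm).2
        simp [this]
      rcases Finset.subset_singleton_iff.mp hsub with h|h
      · rw [h, Finset.prod_empty]
        have : (0:ℝ) ≤ π^2*c^2/6 := by positivity
        linarith
      · rw [h, Finset.prod_singleton]
        have hb := hB (n+1) le_rfl
        have hz : n+1-n-1 = 0 := by omega
        rw [hz, pow_zero, mul_one] at hb
        exact hb
    set s3 := s2.filter (fun m => ¬ m = n+1) with hs3
    have hmem3 : ∀ m ∈ s3, n+2 ≤ m := fun m hm => by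
      have h2 := Finset.mem_filter.mp hm
      have h3 := Finset.mem_filter.mp h2.1
      have := h2.2
      have := h3.2
      omega
    have hBpart : 1 - π^2/48 ≤ ∏ m ∈ s3, ‖g m‖ := by
      set a : ℕ → ℝ := fun m => π^2*c^2/6 * (1/9:ℝ)^(m-n-1) with hadef
      have hc2 : c^2 ≤ 1 := by nlinarith
      have ha0 : ∀ m ∈ s3, 0 ≤ a m := fun m _ => by
        show (0:ℝ) ≤ π^2*c^2/6 * (1/9:ℝ)^(m-n-1)
        positivity
      have ha1 : ∀ m ∈ s3, a m ≤ 1 := fun m _ => by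
        show π^2*c^2/6 * (1/9:ℝ)^(m-n-1) ≤ 1
        have h9 : (1/9:ℝ)^(m-n-1) ≤ 1 := pow_le_one₀ (by norm_num) (by norm_num)
        have h6 : (0:ℝ) ≤ π^2*c^2/6 := by positivity
        nlinarith
      have hw := mr_weier s3 a ha0 ha1
      have hprodle : ∏ m ∈ s3, (1 - a m) ≤ ∏ m ∈ s3, ‖g m‖ :=
        Finset.prod_le_prod (fun m hm => by linarith [ha1 m hm])
          (fun m hm => hB m (by linarith [hmem3 m hm]))
      have hsum : ∑ m ∈ s3, a m ≤ π^2/48 := by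
        have hstep : ∀ m ∈ s3, a m ≤ π^2/54 * (1/9:ℝ)^(m-(n+2)) := by
          intro m hm
          have h2 : m - n - 1 = (m - (n+2)) + 1 := by have := hmem3 m hm; omega
          have h3 : (0:ℝ) ≤ (1/9:ℝ)^(m-(n+2)) := by positivity
          show π^2*c^2/6 * (1/9:ℝ)^(m-n-1) ≤ π^2/54 * (1/9:ℝ)^(m-(n+2))
          rw [h2, pow_succ]
          calc π^2*c^2/6 * ((1/9:ℝ)^(m-(n+2)) * (1/9))
              = c^2 * (π^2*(1/9:ℝ)^(m-(n+2))/54) := by ring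
            _ ≤ 1 * (π^2*(1/9:ℝ)^(m-(n+2))/54) :=
                mul_le_mul_of_nonneg_right hc2 (by positivity)
            _ = π^2/54 * (1/9:ℝ)^(m-(n+2)) := by ring
        have hinj : ∀ x ∈ s3, ∀ y ∈ s3, x-(n+2) = y-(n+2) → x = y := by
          intro x hx y hy h
          have := hmem3 x hx; have := hmem3 y hy; omega
        calc ∑ m ∈ s3, a m ≤ ∑ m ∈ s3, π^2/54 * (1/9:ℝ)^(m-(n+2)) :=
              Finset.sum_le_sum hstep
          _ = ∑ r ∈ s3.image (fun m => m - (n+2)), π^2/54 * (1/9:ℝ)^r :=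
              (Finset.sum_image (f := fun r : ℕ => π^2/54 * (1/9:ℝ)^r) hinj).symm
          _ ≤ ∑' r : ℕ, π^2/54 * (1/9:ℝ)^r :=
              Summable.sum_le_tsum _ (fun r _ => by positivity)
                ((summable_geometric_of_lt_one (by norm_num) (by norm_num)).mul_left _)
          _ = π^2/54 * ((1:ℝ)-1/9)⁻¹ := by
              rw [tsum_mul_left, tsum_geometric_of_lt_one (by norm_num) (by norm_num)]
          _ ≤ π^2/48 := by
              rw [show ((1:ℝ)-1/9)⁻¹ = 9/8 by norm_num]
              nlinarith [sq_nonneg π]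
      linarith
    have hA0 : (0:ℝ) ≤ 1 - π^2*c^2/6 := by linarith
    calc δ = (1 - π^2*c^2/6) * (1 - π^2/48) := hδdef
      _ ≤ _ := mul_le_mul hApart hBpart (by linarith) (le_trans hA0 hApart)
  by_cases hmult : Multipliable g
  · have h2 : Filter.Tendsto (fun s : Finset ℕ => ‖∏ m ∈ s, g m‖)
        Filter.atTop (nhds (‖∏' m, g m‖)) :=
      (continuous_norm.tendsto _).comp hmult.hasProd
    exact ge_of_tendsto h2 (Filter.Eventually.of_forall hfac)
  · rw [tprod_eq_one_of_not_multipliable hmult]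
    simpa using hδ1




open MeasureTheory Real Finset in
theorem moran_measure_nonvanishing_fourier
    (N K : ℕ → ℕ)
    (hN : ∀ j, 3 ≤ N j)
    (hK : ∀ j, 0 < K j)
    (hKN : ∀ j, K j < N j)
    (hc : (⨆ j : ℕ, (K j : ℝ) / (N j : ℝ)) < Real.sqrt 6 / π)
    (μ : Measure ℝ) [IsProbabilityMeasure μ]
    -- μ = ν₁ ∗ ν₂ ∗ ⋯ , encoded via its Fourier transform being the
    -- infinite product of the Fourier transforms of the νₙ's
    (hμ : ∀ ξ : ℝ,
      (∫ x, Complex.exp (-(2 * π * ξ * x) * Complex.I) ∂μ) =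
        ∏' n : ℕ, ((K n : ℂ))⁻¹ * ∑ j ∈ Finset.range (K n),
          Complex.exp (-(2 * π * ξ * ((j : ℝ) /
            ∏ i ∈ Finset.range (n + 1), (N i : ℝ))) * Complex.I)) :
    (0 < ⨅ n : ℕ, ‖∫ x,
        Complex.exp (-(2 * π * (∏ i ∈ Finset.range (n + 1), (N i : ℝ)) * x)
          * Complex.I) ∂μ‖) ∧
    0 < Filter.limsup (fun m : ℕ =>
        ‖∫ x, Complex.exp (-(2 * π * (m : ℝ) * x) * Complex.I) ∂μ‖)
      Filter.atTop ∧
    ¬ Filter.Tendsto (fun m : ℕ =>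
        ‖∫ x, Complex.exp (-(2 * π * (m : ℝ) * x) * Complex.I) ∂μ‖)
      Filter.atTop (nhds 0) := by
  have hNpos : ∀ j, (0:ℝ) < (N j : ℝ) := fun j => by
    exact_mod_cast lt_of_lt_of_le (by norm_num) (hN j)
  have hbdd : BddAbove (Set.range fun j => (K j:ℝ)/(N j:ℝ)) := by
    refine ⟨1, ?_⟩
    rintro x ⟨j, rfl⟩
    exact (div_le_one (hNpos j)).2 (le_of_lt (by exact_mod_cast hKN j))
  set c := ⨆ j : ℕ, (K j:ℝ)/(N j:ℝ) with hcdef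
  have hcb : ∀ j, (K j:ℝ)/(N j:ℝ) ≤ c := fun j => le_ciSup hbdd j
  have hc1 : c ≤ 1 := ciSup_le fun j =>
    (div_le_one (hNpos j)).2 (le_of_lt (by exact_mod_cast hKN j))
  have hc0 : 0 ≤ c := le_trans (by positivity) (hcb 0)
  have hπpos := Real.pi_pos
  have hπc : π^2*c^2/6 < 1 := by
    have h6 : Real.sqrt 6 ^ 2 = 6 := Real.sq_sqrt (by norm_num)
    have hlt : c * π < Real.sqrt 6 := by
      calc c * π < (Real.sqrt 6 / π) * π := mul_lt_mul_of_pos_right hc hπpos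
        _ = Real.sqrt 6 := by field_simp
    nlinarith [Real.sqrt_nonneg 6, mul_nonneg hc0 hπpos.le]
  have hπ48 : π^2/48 < 1 := by nlinarith [Real.pi_lt_d2]
  set δ := (1 - π^2*c^2/6) * (1 - π^2/48) with hδdef
  have hδpos : 0 < δ := mul_pos (by linarith) (by linarith)
  -- the uniform lower bound at the special frequencies
  have hmain : ∀ n : ℕ, δ ≤ ‖∫ x,
      Complex.exp (-(2 * π * (∏ i ∈ Finset.range (n + 1), (N i : ℝ)) * x)
        * Complex.I) ∂μ‖ := by
    intro n
    rw [hμ]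
    exact mr_main N K hN hK hKN c hcb hc1 hc0 hπc n _ rfl
  -- boundedness of the Fourier coefficients
  have hf1 : ∀ m : ℕ, ‖∫ x,
      Complex.exp (-(2 * π * (m : ℝ) * x) * Complex.I) ∂μ‖ ≤ 1 := by
    intro m
    have hnorm : ∀ x : ℝ,
        ‖Complex.exp (-(2 * (π:ℂ) * ((m:ℝ):ℂ) * (x:ℂ)) * Complex.I)‖ = 1 := by
      intro x
      have h2 : -(2 * (π:ℂ) * ((m:ℝ):ℂ) * (x:ℂ)) * Complex.I
          = ((-(2*π*(m:ℝ)*x) : ℝ) : ℂ) * Complex.I := by push_cast; ring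
      rw [h2, Complex.norm_exp_ofReal_mul_I]
    have hb := MeasureTheory.norm_integral_le_of_norm_le_const (μ := μ) (C := 1)
      (f := fun x : ℝ => Complex.exp (-(2 * (π:ℂ) * ((m:ℝ):ℂ) * (x:ℂ)) * Complex.I))
      (Filter.Eventually.of_forall fun x => le_of_eq (hnorm x))
    simpa using hb
  have hbound : Filter.IsBoundedUnder (· ≤ ·) Filter.atTop (fun m : ℕ =>
      ‖∫ x, Complex.exp (-(2 * π * (m : ℝ) * x) * Complex.I) ∂μ‖) :=
    ⟨1, Filter.eventually_map.2 (Filter.Eventually.of_forall hf1)⟩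
  -- the special frequencies tend to infinity
  have hPmono : StrictMono (fun n : ℕ => ∏ i ∈ Finset.range (n+1), N i) := by
    apply strictMono_nat_of_lt_succ
    intro n
    have h1 : 0 < ∏ i ∈ Finset.range (n+1), N i :=
      Finset.prod_pos fun i _ => by have := hN i; omega
    have h2 : (∏ i ∈ Finset.range (n+1+1), N i)
        = (∏ i ∈ Finset.range (n+1), N i) * N (n+1) := Finset.prod_range_succ _ _
    have h4 : (∏ i ∈ Finset.range (n+1), N i) * 3
        ≤ (∏ i ∈ Finset.range (n+1), N i) * N (n+1) :=
      Nat.mul_le_mul_left _ (hN (n+1))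
    omega
  have hPtend : Filter.Tendsto (fun n : ℕ => ∏ i ∈ Finset.range (n+1), N i)
      Filter.atTop Filter.atTop := hPmono.tendsto_atTop
  have hfreq : ∃ᶠ m : ℕ in Filter.atTop, δ ≤ ‖∫ x,
      Complex.exp (-(2 * π * (m : ℝ) * x) * Complex.I) ∂μ‖ := by
    apply hPtend.frequently
    apply Filter.Frequently.of_forall
    intro n
    have hcast : ((∏ i ∈ Finset.range (n+1), N i : ℕ) : ℝ)
        = ∏ i ∈ Finset.range (n+1), (N i : ℝ) := by push_cast; rfl
    rw [hcast]
    exact hmain n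
  refine ⟨?_, ?_, ?_⟩
  · exact lt_of_lt_of_le hδpos (le_ciInf hmain)
  · exact lt_of_lt_of_le hδpos (Filter.le_limsup_of_frequently_le hfreq hbound)
  · intro hT
    have hev : ∀ᶠ m : ℕ in Filter.atTop, ‖∫ x,
        Complex.exp (-(2 * π * (m : ℝ) * x) * Complex.I) ∂μ‖ < δ :=
      hT.eventually_lt_const hδpos
    obtain ⟨m, hm1, hm2⟩ := (hfreq.and_eventually hev).exists
    linarith
end

section
/- Let E ⊆ ℝ/ℤ and suppose there exists a strictly increasing sequence of positive integers n_k such that the closure of ⋃_k n_k E is not all of ℝ/ℤ. If μ is a finite Borel measure with support contained in E and μ ≠ 0, then μ̂(m) does not tend to 0 as |m| → ∞ (E is a set of multiplicity only for non-Rajchman measures; equivalently, every Rajchman measure vanishes on E). -/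
open MeasureTheory Filter Topology AddCircle

private lemma contMap_integrable (f : C(AddCircle (1:ℝ), ℂ))
    (ν : Measure (AddCircle (1:ℝ))) [IsFiniteMeasure ν] : Integrable f ν := by
  haveI : Fact (0 < (1:ℝ)) := ⟨one_pos⟩
  exact f.continuous.integrable_of_hasCompactSupport (isClosed_tsupport _).isCompact

private lemma integral_fourier_haar_eq_zero {m : ℤ} (hm : m ≠ 0) :
    ∫ x : AddCircle (1:ℝ), fourier m x ∂(haarAddCircle) = 0 := by
  haveI : Fact (0 < (1:ℝ)) := ⟨one_pos⟩
  exact integral_eq_zero_of_add_right_eq_neg (μ := haarAddCircle)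
    (fourier_add_half_inv_index hm one_pos)

open MeasureTheory in
theorem rajchman_vanishes_on_H_sets
    (E : Set (AddCircle (1 : ℝ)))
    (n : ℕ → ℕ) (hpos : ∀ k, 0 < n k) (hmono : StrictMono n)
    (hcl : closure (⋃ k : ℕ, (fun x : AddCircle (1 : ℝ) => (n k : ℤ) • x) '' E)
      ≠ Set.univ)
    (μ : Measure (AddCircle (1 : ℝ))) [IsFiniteMeasure μ]
    (hμ0 : μ ≠ 0) (hsupp : μ Eᶜ = 0) :
    ¬ Filter.Tendsto (fun m : ℤ =>
        ‖∫ x, fourier (-m) x ∂μ‖) Filter.cofinite (nhds 0) := by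
  haveI : Fact (0 < (1:ℝ)) := ⟨one_pos⟩
  intro h
  obtain ⟨z, hz⟩ := (Set.ne_univ_iff_exists_notMem _).mp hcl
  -- Urysohn function: 0 on the closure, 1 at z
  obtain ⟨f, hf0, hf1, hf01⟩ := exists_continuous_zero_one_of_isClosed
    isClosed_closure (isClosed_singleton (x := z))
    (by simpa [Set.disjoint_singleton_right] using hz)
  set F : C(AddCircle (1:ℝ), ℂ) :=
    ⟨fun x => (f x : ℂ), Complex.continuous_ofReal.comp f.continuous⟩ with hFdef
  set A : ℝ := ∫ x, f x ∂(haarAddCircle : Measure (AddCircle (1:ℝ))) with hA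
  have hfnn : ∀ x, 0 ≤ f x := fun x => (hf01 x).1
  have hfint : Integrable f (haarAddCircle : Measure (AddCircle (1:ℝ))) :=
    f.continuous.integrable_of_hasCompactSupport (isClosed_tsupport _).isCompact
  have hApos : 0 < A := by
    rw [hA]
    refine (integral_pos_iff_support_of_nonneg_ae
      (Filter.Eventually.of_forall hfnn) hfint).mpr ?_
    have hopen : IsOpen (Function.support f) := by
      have : Function.support f = f ⁻¹' {0}ᶜ := by
        ext x; simp [Function.mem_support]
      rw [this]
      exact isOpen_compl_singleton.preimage f.continuous
    refine hopen.measure_pos _ ⟨z, ?_⟩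
    have : f z = 1 := hf1 (Set.mem_singleton z)
    simp [Function.mem_support, this]
  -- approximate F by a trigonometric polynomial P within A/3
  have hmemtop : F ∈ (Submodule.span ℂ (Set.range (@fourier 1))).topologicalClosure := by
    rw [span_fourier_closure_eq_top]; trivial
  have hmemcl : F ∈ closure ((Submodule.span ℂ (Set.range (@fourier 1)) :
      Submodule ℂ C(AddCircle (1:ℝ), ℂ)) : Set C(AddCircle (1:ℝ), ℂ)) := hmemtop
  obtain ⟨P, hPmem, hPdist⟩ := Metric.mem_closure_iff.mp hmemcl (A/3) (by positivity)
  obtain ⟨c, hc⟩ := Finsupp.mem_span_range_iff_exists_finsupp.mp hPmem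
  have hPapp : ∀ x, P x = ∑ m ∈ c.support, c m * fourier m x := by
    intro x
    rw [← hc]
    simp [Finsupp.sum, smul_eq_mul]
  -- abbreviations
  set M : ℝ := (μ Set.univ).toReal with hM
  have hMpos : 0 < M := by
    rw [hM]
    refine ENNReal.toReal_pos ?_ (measure_ne_top μ _)
    simpa [Measure.measure_univ_eq_zero] using hμ0
  set I : ℤ → ℂ := fun j => ∫ x, fourier j x ∂μ with hI
  have hI0 : I 0 = (M : ℂ) := by
    have : (fun x : AddCircle (1:ℝ) => fourier 0 x) = fun _ => (1 : ℂ) := by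
      ext x; exact fourier_zero
    simp [hI, this, integral_const, hM, measureReal_def]
  -- μ-a.e. points lie in E
  have hE : ∀ᵐ x ∂μ, x ∈ E := by
    rw [ae_iff]
    exact hsupp
  -- integral of F over rotated variable is zero
  have hzero : ∀ k, ∫ x, F ((n k : ℤ) • x) ∂μ = 0 := by
    intro k
    have : (fun x => F ((n k : ℤ) • x)) =ᵐ[μ] 0 := by
      filter_upwards [hE] with x hx
      have hmem : ((n k : ℤ) • x) ∈
          closure (⋃ k : ℕ, (fun x : AddCircle (1:ℝ) => (n k : ℤ) • x) '' E) :=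
        subset_closure (Set.mem_iUnion.mpr ⟨k, ⟨x, hx, rfl⟩⟩)
      have hfz : f ((n k : ℤ) • x) = 0 := hf0 hmem
      simp only [Pi.zero_apply, hFdef, ContinuousMap.coe_mk]
      rw [hfz, Complex.ofReal_zero]
    rw [integral_congr_ae this]
    simp
  -- integrability of rotated continuous maps
  have hintRot : ∀ (G : C(AddCircle (1:ℝ), ℂ)) (k : ℕ),
      Integrable (fun x => G ((n k : ℤ) • x)) μ := by
    intro G k
    exact contMap_integrable (G.comp ⟨fun x => (n k : ℤ) • x, continuous_zsmul _⟩) μ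
  -- expansion of the rotated polynomial integral
  have hexp : ∀ k, ∫ x, P ((n k : ℤ) • x) ∂μ = ∑ m ∈ c.support, c m * I (m * n k) := by
    intro k
    have h1 : ∀ x : AddCircle (1:ℝ),
        P ((n k : ℤ) • x) = ∑ m ∈ c.support, c m * fourier (m * (n k : ℤ)) x := by
      intro x
      rw [hPapp]
      refine Finset.sum_congr rfl fun m _ => ?_
      congr 1
      rw [fourier_apply, fourier_apply, smul_smul]
    simp_rw [h1]
    rw [integral_finset_sum _ (fun m _ =>
      (contMap_integrable (fourier (m * (n k : ℤ))) μ).const_mul _)]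
    refine Finset.sum_congr rfl fun m _ => ?_
    rw [integral_const_mul]
  -- uniform bound
  have hbound : ∀ k, ‖∑ m ∈ c.support, c m * I (m * n k)‖ ≤ A/3 * M := by
    intro k
    rw [← hexp k]
    have heq : ∫ x, P ((n k : ℤ) • x) ∂μ
        = ∫ x, (P ((n k : ℤ) • x) - F ((n k : ℤ) • x)) ∂μ := by
      rw [integral_sub (hintRot P k) (hintRot F k), hzero k, sub_zero]
    rw [heq]
    have hle : ∀ᵐ x ∂μ, ‖P ((n k : ℤ) • x) - F ((n k : ℤ) • x)‖ ≤ A/3 := by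
      refine Filter.Eventually.of_forall fun x => ?_
      have := ContinuousMap.dist_apply_le_dist (f := P) (g := F) ((n k : ℤ) • x)
      rw [dist_eq_norm] at this
      calc ‖P ((n k : ℤ) • x) - F ((n k : ℤ) • x)‖ ≤ dist P F := this
        _ ≤ A/3 := by rw [dist_comm] at hPdist; exact hPdist.le
    simpa [hM, measureReal_def] using norm_integral_le_of_norm_le_const hle
  -- the limit of the sums is c 0 * M
  have hlim : Filter.Tendsto (fun k => ∑ m ∈ c.support, c m * I (m * n k))
      Filter.atTop (nhds (c 0 * (M : ℂ))) := by
    have hsum : (c 0 * (M : ℂ)) = ∑ m ∈ c.support,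
        (if m = 0 then c 0 * (M : ℂ) else 0) := by
      rw [Finset.sum_ite_eq' c.support (0 : ℤ) (fun _ => c 0 * (M : ℂ))]
      split_ifs with h0
      · rfl
      · rw [Finsupp.notMem_support_iff.mp h0, zero_mul]
    rw [hsum]
    refine tendsto_finset_sum _ fun m hm => ?_
    by_cases hm0 : m = 0
    · subst hm0
      simp only [if_true, zero_mul, hI0]
      exact tendsto_const_nhds
    · simp only [hm0, if_false]
      have hinj : Function.Injective (fun k : ℕ => -(m * (n k : ℤ))) := by
        intro a b hab
        simp only [neg_inj] at hab
        have := mul_left_cancel₀ (by exact_mod_cast hm0) hab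
        exact hmono.injective (by exact_mod_cast this)
      have h1 : Filter.Tendsto (fun k : ℕ => -(m * (n k : ℤ)))
          Filter.atTop Filter.cofinite := by
        rw [← Nat.cofinite_eq_atTop]
        exact hinj.tendsto_cofinite
      have h2 : Filter.Tendsto
          (fun k => ‖∫ x, fourier (-(-(m * (n k : ℤ)))) x ∂μ‖)
          Filter.atTop (nhds 0) := h.comp h1
      simp only [neg_neg] at h2
      have h3 : Filter.Tendsto (fun k => I (m * (n k : ℤ))) Filter.atTop (nhds 0) := by
        rw [tendsto_zero_iff_norm_tendsto_zero]
        simpa [hI] using h2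
      have h4 : Filter.Tendsto (fun k => c m * I (m * (n k : ℤ)))
          Filter.atTop (nhds (c m * 0)) := h3.const_mul (c m)
      rw [mul_zero] at h4
      exact h4
  -- hence ‖c 0‖ ≤ A/3
  have hc0_le : ‖c 0‖ ≤ A/3 := by
    have h5 : Filter.Tendsto (fun k => ‖∑ m ∈ c.support, c m * I (m * n k)‖)
        Filter.atTop (nhds ‖c 0 * (M : ℂ)‖) := hlim.norm
    have h6 : ‖c 0 * (M : ℂ)‖ ≤ A/3 * M :=
      le_of_tendsto h5 (Filter.Eventually.of_forall hbound)
    rw [norm_mul, Complex.norm_real, Real.norm_of_nonneg hMpos.le] at h6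
    exact le_of_mul_le_mul_right h6 hMpos
  -- on the other hand, ∫ P dhaar = c 0 and ∫ F dhaar = A
  have hPhaar : ∫ x, P x ∂(haarAddCircle : Measure (AddCircle (1:ℝ))) = c 0 := by
    simp_rw [hPapp]
    rw [integral_finset_sum _ (fun m _ =>
      (contMap_integrable (fourier m) haarAddCircle).const_mul _)]
    have hterm : ∀ m ∈ c.support, (∫ x, c m * fourier m x
        ∂(haarAddCircle : Measure (AddCircle (1:ℝ))))
        = if m = 0 then c 0 else 0 := by
      intro m _
      rw [integral_const_mul]
      by_cases hm0 : m = 0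
      · subst hm0
        have h7 : (fun x : AddCircle (1:ℝ) => fourier 0 x) = fun _ => (1 : ℂ) := by
          ext x; exact fourier_zero
        simp [h7]
      · rw [integral_fourier_haar_eq_zero hm0, mul_zero, if_neg hm0]
    rw [Finset.sum_congr rfl hterm,
      Finset.sum_ite_eq' c.support (0 : ℤ) (fun _ => c 0)]
    split_ifs with h0
    · rfl
    · exact (Finsupp.notMem_support_iff.mp h0).symm
  have hFhaar : ∫ x, F x ∂(haarAddCircle : Measure (AddCircle (1:ℝ))) = (A : ℂ) := by
    rw [hA]
    exact integral_ofReal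
  have hc0_ge : ‖c 0 - (A : ℂ)‖ ≤ A/3 := by
    rw [← hPhaar, ← hFhaar, ← integral_sub (contMap_integrable P haarAddCircle)
      (contMap_integrable F haarAddCircle)]
    have hle : ∀ᵐ x ∂(haarAddCircle : Measure (AddCircle (1:ℝ))), ‖P x - F x‖ ≤ A/3 := by
      refine Filter.Eventually.of_forall fun x => ?_
      have := ContinuousMap.dist_apply_le_dist (f := P) (g := F) x
      rw [dist_eq_norm] at this
      calc ‖P x - F x‖ ≤ dist P F := this
        _ ≤ A/3 := by rw [dist_comm] at hPdist; exact hPdist.le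
    have := norm_integral_le_of_norm_le_const hle
    simpa [measure_univ] using this
  -- contradiction
  have : A ≤ A/3 + A/3 := by
    calc A = ‖(A : ℂ)‖ := by rw [Complex.norm_real, Real.norm_of_nonneg hApos.le]
      _ = ‖c 0 - (c 0 - (A : ℂ))‖ := by ring_nf
      _ ≤ ‖c 0‖ + ‖c 0 - (A : ℂ)‖ := norm_sub_le _ _
      _ ≤ A/3 + A/3 := add_le_add hc0_le hc0_ge
  linarith
end

section
/- Let N_j ≥ 2, B_j ⊆ {0,...,N_j−1} nonempty with c = sup_j (max B_j)/N_j < 1/2, and let E be the associated Moran set. Then the Fourier dimension of E is 0: there is no nonzero finite Borel measure μ supported on E and β > 0 with |μ̂(ξ)| ≤ C|ξ|^{−β/2} for all ξ. -/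
set_option maxHeartbeats 1000000
open Finset

noncomputable def Pd (N : ℕ → ℕ) (k : ℕ) : ℕ := ∏ i ∈ Finset.range (k+1), N i

theorem Pd_pos (N : ℕ → ℕ) (hN : ∀ j, 2 ≤ N j) (k : ℕ) : 0 < Pd N k :=
  prod_pos fun i _ => lt_of_lt_of_le two_pos (hN i)

theorem Pd_cast (N : ℕ → ℕ) (k : ℕ) : ((Pd N k : ℕ):ℝ) = ∏ i ∈ range (k+1), (N i : ℝ) := by
  unfold Pd; push_cast; ring

theorem Pd_succ (N : ℕ → ℕ) (k : ℕ) : Pd N (k+1) = Pd N k * N (k+1) := by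
  unfold Pd; rw [prod_range_succ]

theorem Pd_grow (N : ℕ → ℕ) (hN : ∀ j, 2 ≤ N j) (k i : ℕ) :
    Pd N k * 2^i ≤ Pd N (k+i) := by
  induction i with
  | zero => simp
  | succ i ih =>
    calc Pd N k * 2^(i+1) = (Pd N k * 2^i) * 2 := by ring
      _ ≤ Pd N (k+i) * N (k+i+1) := Nat.mul_le_mul ih (hN _)
      _ = Pd N (k+(i+1)) := by rw [show k+(i+1) = (k+i)+1 from by ring, Pd_succ]

theorem Pd_two (N : ℕ → ℕ) (hN : ∀ j, 2 ≤ N j) (k : ℕ) : 2^(k+1) ≤ Pd N k := by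
  calc 2^(k+1) = ∏ t ∈ range (k+1), 2 := by rw [prod_const, card_range]
  _ ≤ _ := prod_le_prod (fun i _ => by norm_num) (fun i _ => hN i)

theorem moran_tail (N : ℕ → ℕ) (hN : ∀ j, 2 ≤ N j) (b : ℕ → ℕ) (c : ℝ)
    (hb : ∀ j, (b j : ℝ) ≤ c * N j) (hbN : ∀ j, b j < N j) (hc0 : 0 ≤ c) (k : ℕ) :
    ∃ A : ℤ, ∃ τ : ℝ,
      ((Pd N k : ℕ) : ℝ) *
        (∑' j : ℕ, (b j : ℝ) / ∏ i ∈ Finset.range (j + 1), (N i : ℝ)) = A + τ ∧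
      0 ≤ τ ∧ τ ≤ 2*c := by
  have hPpos : ∀ m, (0:ℝ) < (Pd N m : ℝ) := fun m => by exact_mod_cast Pd_pos N hN m
  have ha0 : ∀ j, 0 ≤ (b j : ℝ) / (Pd N j : ℝ) := fun j =>
    div_nonneg (Nat.cast_nonneg _) (le_of_lt (hPpos j))
  have hale : ∀ j, (b j : ℝ) / (Pd N j : ℝ) ≤ (1/2)^j := by
    intro j
    cases j with
    | zero =>
      simp only [pow_zero]
      rw [div_le_one (hPpos 0)]
      have h0 : (b 0 : ℝ) ≤ (N 0 : ℝ) := by exact_mod_cast le_of_lt (hbN 0)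
      have hP0 : (Pd N 0 : ℝ) = (N 0 : ℝ) := by unfold Pd; simp
      rw [hP0]; exact h0
    | succ i =>
      have h1 : (b (i+1) : ℝ) ≤ (N (i+1) : ℝ) := by exact_mod_cast le_of_lt (hbN (i+1))
      have h2 : (Pd N (i+1) : ℝ) = (Pd N i : ℝ) * (N (i+1) : ℝ) := by
        rw [Pd_succ]; push_cast; ring
      have h3 : (2:ℝ)^(i+1) ≤ (Pd N i : ℝ) := by exact_mod_cast Pd_two N hN i
      have hNpos : (0:ℝ) < (N (i+1) : ℝ) := by have := hN (i+1); positivity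
      calc (b (i+1):ℝ) / (Pd N (i+1) : ℝ) ≤ (N (i+1) : ℝ) / (Pd N (i+1) : ℝ) := by
            gcongr
        _ = 1 / (Pd N i : ℝ) := by
            rw [h2, div_eq_div_iff (mul_pos (hPpos i) hNpos).ne' (hPpos i).ne']
            ring
        _ ≤ 1 / 2^(i+1) := one_div_le_one_div_of_le (by positivity) h3
        _ = (1/2)^(i+1) := by rw [one_div_pow]
  have hsum : Summable (fun j => (b j : ℝ) / (Pd N j : ℝ)) :=
    Summable.of_nonneg_of_le ha0 hale (summable_geometric_of_lt_one (by norm_num) (by norm_num))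
  have hsummul : Summable (fun j => (Pd N k : ℝ) * ((b j : ℝ) / (Pd N j : ℝ))) := hsum.mul_left _
  have hxsplit : ∑ j ∈ range (k+1), (Pd N k : ℝ) * ((b j : ℝ) / (Pd N j : ℝ))
      + ∑' i : ℕ, (Pd N k : ℝ) * ((b (i+(k+1)) : ℝ) / (Pd N (i+(k+1)) : ℝ))
      = ∑' j, (Pd N k : ℝ) * ((b j : ℝ) / (Pd N j : ℝ)) := Summable.sum_add_tsum_nat_add
    (f := fun j => (Pd N k : ℝ) * ((b j : ℝ) / (Pd N j : ℝ))) (k+1) hsummul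
  refine ⟨(∑ j ∈ range (k+1), (b j) * ∏ i ∈ Ico (j+1) (k+1), N i : ℕ),
    ∑' i : ℕ, (Pd N k : ℝ) * ((b (i+(k+1)) : ℝ) / (Pd N (i+(k+1)) : ℝ)), ?_, ?_, ?_⟩
  · have hxe : (Pd N k : ℝ) * (∑' j : ℕ, (b j : ℝ) / (Pd N j : ℝ))
        = ∑' j, (Pd N k : ℝ) * ((b j : ℝ) / (Pd N j : ℝ)) := by rw [tsum_mul_left]
    have hterm : ∀ j ∈ range (k+1), (Pd N k : ℝ) * ((b j:ℝ) / (Pd N j:ℝ))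
        = ((b j * ∏ i ∈ Ico (j+1) (k+1), N i : ℕ) : ℝ) := by
      intro j hj
      have hjk : j + 1 ≤ k + 1 := mem_range.mp hj
      have hsplit : (Pd N j : ℝ) * (∏ i ∈ Ico (j+1) (k+1), (N i:ℝ)) = (Pd N k : ℝ) := by
        rw [Pd_cast, Pd_cast]
        exact prod_range_mul_prod_Ico (fun i => (N i : ℝ)) hjk
      push_cast
      rw [← hsplit]
      have hPj := (hPpos j).ne'
      field_simp
    have hax : (∑' j : ℕ, (b j : ℝ) / ∏ i ∈ Finset.range (j + 1), (N i : ℝ))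
        = ∑' j, (b j : ℝ) / (Pd N j : ℝ) := by
      apply tsum_congr; intro j
      rw [Pd_cast]
    rw [hax, hxe, ← hxsplit]
    push_cast
    congr 1
    refine Finset.sum_congr rfl fun j hj => ?_
    have := hterm j hj
    push_cast at this ⊢
    linarith [this]
  · exact tsum_nonneg fun i => mul_nonneg (le_of_lt (hPpos k)) (ha0 _)
  · have hsumtail : Summable (fun i => (Pd N k : ℝ) * ((b (i+(k+1)):ℝ) / (Pd N (i+(k+1)):ℝ))) :=
      (summable_nat_add_iff (k+1)).mpr hsummul
    have hle : ∀ i : ℕ, (Pd N k : ℝ) * ((b (i+(k+1)):ℝ) / (Pd N (i+(k+1)):ℝ)) ≤ c * (1/2)^i := by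
      intro i
      have hidx : i + (k+1) = (k+i)+1 := by ring
      have hPmul : (Pd N ((k+i)+1) : ℝ) = (Pd N (k+i) : ℝ) * (N ((k+i)+1) : ℝ) := by
        rw [Pd_succ]; push_cast; ring
      have hgrow : (Pd N k : ℝ) * 2^i ≤ (Pd N (k+i) : ℝ) := by exact_mod_cast Pd_grow N hN k i
      have hbc : (b ((k+i)+1) : ℝ) ≤ c * N ((k+i)+1) := hb _
      have hNpos : (0:ℝ) < (N ((k+i)+1) : ℝ) := by have := hN ((k+i)+1); positivity
      rw [hidx]
      calc (Pd N k : ℝ) * ((b ((k+i)+1):ℝ) / (Pd N ((k+i)+1) : ℝ))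
          ≤ (Pd N k : ℝ) * ((c * N ((k+i)+1)) / (Pd N ((k+i)+1) : ℝ)) := by
            gcongr
        _ = c * ((Pd N k : ℝ) / (Pd N (k+i) : ℝ)) := by
            rw [hPmul, mul_div_mul_right _ _ hNpos.ne']
            ring
        _ ≤ c * (1/2)^i := by
            apply mul_le_mul_of_nonneg_left _ hc0
            rw [div_le_iff₀ (hPpos _), div_pow, one_pow]
            rw [div_mul_eq_mul_div, le_div_iff₀ (by positivity)]
            calc (Pd N k : ℝ) * 2^i ≤ (Pd N (k+i) : ℝ) := hgrow
              _ = 1 * (Pd N (k+i) : ℝ) := (one_mul _).symm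
    calc (∑' i : ℕ, (Pd N k : ℝ) * ((b (i+(k+1)):ℝ) / (Pd N (i+(k+1)) : ℝ)))
          ≤ ∑' i : ℕ, c * (1/2)^i := by
          apply Summable.tsum_le_tsum hle hsumtail
          exact (summable_geometric_of_lt_one (by norm_num) (by norm_num)).mul_left c
      _ = c * ∑' i : ℕ, (1/2:ℝ)^i := tsum_mul_left
      _ = c * 2 := by rw [tsum_geometric_two]
      _ = 2 * c := by ring

noncomputable def myexp (r : ℝ) : ℂ := Complex.exp (r * Complex.I)

theorem myexp_abs (r : ℝ) : ‖myexp r‖ = 1 := Complex.norm_exp_ofReal_mul_I r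

theorem myexp_norm (r : ℝ) : ‖myexp r‖ = 1 := myexp_abs r

theorem myexp_re (r : ℝ) : (myexp r).re = Real.cos r := Complex.exp_ofReal_mul_I_re r

theorem myexp_add (r s : ℝ) : myexp (r+s) = myexp r * myexp s := by
  simp [myexp, ← Complex.exp_add]; ring_nf

theorem myexp_pow (r : ℝ) (n : ℕ) : myexp r ^ n = myexp (n * r) := by
  rw [myexp, ← Complex.exp_nat_mul, myexp]; push_cast; ring_nf

theorem myexp_conj (r : ℝ) : (starRingEnd ℂ) (myexp r) = myexp (-r) := by
  simp [myexp, ← Complex.exp_conj]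

theorem myexp_zero : myexp 0 = 1 := by simp [myexp]

theorem integrable_myexp (μ : MeasureTheory.Measure ℝ) [MeasureTheory.IsFiniteMeasure μ]
    (a b : ℝ) : MeasureTheory.Integrable (fun x => myexp (a * x + b)) μ := by
  refine MeasureTheory.Integrable.mono' (MeasureTheory.integrable_const 1) ?_ ?_
  · unfold myexp
    exact (Complex.continuous_exp.comp (by continuity)).aestronglyMeasurable
  · exact Filter.Eventually.of_forall fun x => le_of_eq (myexp_norm _)

theorem continuous_myexp_comp (a b : ℝ) : Continuous (fun x : ℝ => myexp (a * x + b)) := by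
  unfold myexp
  exact Complex.continuous_exp.comp (by continuity)
open Real in
theorem Sbound (c : ℝ) (hc0 : 0 ≤ c) (hc : c < 1/2) (A : ℤ) (τ : ℝ)
    (hτ0 : 0 ≤ τ) (hτ : τ ≤ 2*c) (nn : ℕ) :
    ‖∑ j ∈ range nn, myexp (2*π*(((A:ℝ)+τ) - (c+1/2))) ^ j‖
      ≤ 1/(Real.cos (π*c))^2 := by
  have hπ := Real.pi_pos
  set θ : ℝ := 2*π*(((A:ℝ)+τ) - (c+1/2)) with hθ
  set d : ℝ := Real.cos (π*c) with hd
  have hdpos : 0 < d := by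
    apply Real.cos_pos_of_mem_Ioo
    constructor
    · nlinarith
    · nlinarith
  have hd1 : d ≤ 1 := Real.cos_le_one _
  have hcosθ : Real.cos θ = -Real.cos (2*π*(τ - c)) := by
    have h1 : θ = (2*π*(τ-c) - π) + (A:ℤ) * (2*π) := by rw [hθ]; push_cast; ring
    rw [h1, Real.cos_add_int_mul_two_pi, Real.cos_sub_pi]
  have hcos2 : Real.cos (2*π*(τ-c)) = 2*(Real.cos (π*(τ-c)))^2 - 1 := by
    rw [show 2*π*(τ-c) = 2*(π*(τ-c)) by ring, Real.cos_two_mul]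
  have hmono : d ≤ Real.cos (π*(τ-c)) := by
    rw [← Real.cos_abs (π*(τ-c))]
    apply Real.cos_le_cos_of_nonneg_of_le_pi (abs_nonneg _) (by nlinarith)
    rw [abs_mul, abs_of_pos hπ]
    have : |τ - c| ≤ c := abs_le.mpr ⟨by linarith, by linarith⟩
    nlinarith
  have hkey : 2*d^2 ≤ 1 - Real.cos θ := by
    rw [hcosθ, hcos2]
    nlinarith
  set z : ℂ := myexp θ with hz
  have hzre : z.re = Real.cos θ := myexp_re θ
  have hzabs : ‖z‖ = 1 := myexp_abs θ
  have hzne : z ≠ 1 := by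
    intro h
    rw [h] at hzre
    simp at hzre
    nlinarith
  have hsub : 2*d^2 ≤ ‖z - 1‖ := by
    calc 2*d^2 ≤ 1 - Real.cos θ := hkey
      _ = |(z - 1).re| := by
          rw [Complex.sub_re, Complex.one_re, hzre, abs_of_nonpos]
          · ring
          · nlinarith [Real.cos_le_one θ, hzre]
      _ ≤ ‖z - 1‖ := Complex.abs_re_le_norm _
  rw [geom_sum_eq hzne]
  rw [norm_div]
  have hnum : ‖z^nn - 1‖ ≤ 2 := by
    calc ‖z^nn - 1‖ ≤ ‖z^nn‖ + ‖(1:ℂ)‖ :=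
          norm_sub_le _ _
      _ = 2 := by rw [norm_pow, hzabs]; norm_num
  calc ‖z ^ nn - 1‖ / ‖z - 1‖ ≤ 2 / (2*d^2) := by
        apply div_le_div₀ (by norm_num) hnum (by positivity) hsub
    _ = 1/d^2 := by
        rw [div_eq_div_iff (by positivity) (by positivity)]
        ring

theorem rpow_anti {a b s : ℝ} (ha : 0 < a) (hab : a ≤ b) (hs : 0 ≤ s) :
    b ^ (-s) ≤ a ^ (-s) := by
  rw [Real.rpow_neg (le_of_lt (lt_of_lt_of_le ha hab)), Real.rpow_neg (le_of_lt ha)]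
  apply inv_anti₀ (Real.rpow_pos_of_pos ha s)
  exact Real.rpow_le_rpow (le_of_lt ha) hab hs

open Real in
noncomputable def gfun (Q t0 : ℝ) (j l : ℕ) (x : ℝ) : ℂ :=
  myexp ((((j:ℝ)-(l:ℝ))*(2*π*Q)) * x + (-(((j:ℝ)-(l:ℝ))*(2*π*t0))))

open Real in
noncomputable def Sfun (Q t0 : ℝ) (nn : ℕ) (x : ℝ) : ℂ :=
  ∑ j ∈ Finset.range nn, myexp ((2*π*Q)*x + (-(2*π*t0))) ^ j

open MeasureTheory in
theorem gfun_integrable (μ : Measure ℝ) [IsFiniteMeasure μ] (Q t0 : ℝ) (j l : ℕ) :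
    Integrable (gfun Q t0 j l) μ := integrable_myexp μ _ _

open Real in
theorem Sfun_mul_conj (Q t0 : ℝ) (nn : ℕ) (x : ℝ) :
    Sfun Q t0 nn x * (starRingEnd ℂ) (Sfun Q t0 nn x)
      = ∑ j ∈ Finset.range nn, ∑ l ∈ Finset.range nn, gfun Q t0 j l x := by
  unfold Sfun gfun
  simp only [map_sum, map_pow, myexp_conj]
  rw [Finset.sum_mul_sum]
  refine Finset.sum_congr rfl fun j _ => Finset.sum_congr rfl fun l _ => ?_
  rw [myexp_pow, myexp_pow, ← myexp_add]
  congr 1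
  ring

theorem Sfun_cont (Q t0 : ℝ) (nn : ℕ) : Continuous (Sfun Q t0 nn) := by
  unfold Sfun
  exact continuous_finset_sum _ fun j _ => (continuous_myexp_comp _ _).pow j

open Real in
theorem Sfun_abs_le (Q t0 : ℝ) (nn : ℕ) (x : ℝ) : ‖Sfun Q t0 nn x‖ ≤ (nn:ℝ) := by
  unfold Sfun
  calc ‖∑ j ∈ Finset.range nn, myexp ((2*π*Q)*x + (-(2*π*t0))) ^ j‖
      ≤ ∑ j ∈ Finset.range nn, ‖myexp ((2*π*Q)*x + (-(2*π*t0))) ^ j‖ :=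
        norm_sum_le _ _
    _ = ∑ _j ∈ Finset.range nn, 1 := by
        refine Finset.sum_congr rfl fun j _ => ?_
        rw [norm_pow, myexp_abs, one_pow]
    _ = (nn:ℝ) := by rw [Finset.sum_const, Finset.card_range, nsmul_eq_mul, mul_one]

open MeasureTheory Real in
theorem key_ineq (μ : Measure ℝ) [IsFiniteMeasure μ] (β C c : ℝ) (hβ : 0 < β) (hC0 : 0 ≤ C)
    (hc0 : 0 ≤ c) (hc : c < 1/2)
    (hdecay : ∀ ξ : ℝ, ξ ≠ 0 →
      ‖∫ x, Complex.exp (-(2 * π * ξ * x) * Complex.I) ∂μ‖ ≤ C * |ξ| ^ (-(β/2)))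
    (Q : ℝ) (hQ1 : 1 ≤ Q)
    (htail : ∀ᵐ x ∂μ, ∃ A : ℤ, ∃ τ : ℝ, Q * x = (A:ℝ) + τ ∧ 0 ≤ τ ∧ τ ≤ 2*c)
    (nn : ℕ) :
    (nn:ℝ) * (μ Set.univ).toReal
      ≤ (1/(Real.cos (π*c))^2)^2 * (μ Set.univ).toReal + (nn:ℝ)^2 * (C * Q ^ (-(β/2))) := by
  have hπ := Real.pi_pos
  set M : ℝ := (μ Set.univ).toReal with hM
  have hQpos : (0:ℝ) < Q := lt_of_lt_of_le one_pos hQ1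
  set E0 : ℝ := C * Q ^ (-(β/2)) with hE0
  have hE00 : 0 ≤ E0 := mul_nonneg hC0 (Real.rpow_nonneg (le_of_lt hQpos) _)
  set t0 : ℝ := c + 1/2 with ht0
  have hJ : ∫ x, Sfun Q t0 nn x * (starRingEnd ℂ) (Sfun Q t0 nn x) ∂μ
      = ∑ j ∈ Finset.range nn, ∑ l ∈ Finset.range nn, ∫ x, gfun Q t0 j l x ∂μ := by
    calc ∫ x, Sfun Q t0 nn x * (starRingEnd ℂ) (Sfun Q t0 nn x) ∂μ
        = ∫ x, ∑ j ∈ Finset.range nn, ∑ l ∈ Finset.range nn, gfun Q t0 j l x ∂μ := by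
          congr 1; funext x; exact Sfun_mul_conj Q t0 nn x
      _ = ∑ j ∈ Finset.range nn, ∫ x, ∑ l ∈ Finset.range nn, gfun Q t0 j l x ∂μ :=
          integral_finset_sum _ (fun j _ =>
            integrable_finset_sum _ (fun l _ => gfun_integrable μ Q t0 j l))
      _ = ∑ j ∈ Finset.range nn, ∑ l ∈ Finset.range nn, ∫ x, gfun Q t0 j l x ∂μ :=
          Finset.sum_congr rfl fun j _ =>
            integral_finset_sum _ (fun l _ => gfun_integrable μ Q t0 j l)
  have hdiag : ∀ j : ℕ, ∫ x, gfun Q t0 j j x ∂μ = (M:ℂ) := by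
    intro j
    have h0 : (gfun Q t0 j j) = fun _ : ℝ => (1:ℂ) := by
      funext x
      unfold gfun
      have harg : (((j:ℝ)-(j:ℝ))*(2*π*Q)) * x + (-(((j:ℝ)-(j:ℝ))*(2*π*t0))) = 0 := by ring
      rw [harg, myexp_zero]
    rw [h0, integral_const]
    simp [hM, Complex.real_smul, measureReal_def]
  have hoff : ∀ j l : ℕ, j ≠ l → ‖∫ x, gfun Q t0 j l x ∂μ‖ ≤ E0 := by
    intro j l hjl
    have hm1 : 1 ≤ |(j:ℝ) - (l:ℝ)| := by
      have hne : (j:ℤ) ≠ (l:ℤ) := by exact_mod_cast hjl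
      have h1 := Int.one_le_abs (sub_ne_zero.mpr hne)
      have h2 : ((1:ℤ):ℝ) ≤ ((|(j:ℤ) - (l:ℤ)|:ℤ):ℝ) := by exact_mod_cast h1
      push_cast at h2
      exact h2
    have hm0 : (j:ℝ) - (l:ℝ) ≠ 0 := by
      intro h
      rw [h, abs_zero] at hm1
      linarith
    obtain ⟨ξ, hξdef⟩ : ∃ ξ : ℝ, ξ = -(((j:ℝ)-(l:ℝ))*Q) := ⟨_, rfl⟩
    have hξ0 : ξ ≠ 0 := by
      rw [hξdef]
      intro h
      rcases mul_eq_zero.mp (neg_eq_zero.mp h) with h' | h'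
      · exact hm0 h'
      · exact absurd h' (ne_of_gt hQpos)
    have hsplitg : (gfun Q t0 j l)
        = fun x => myexp (-((((j:ℝ)-(l:ℝ)))*(2*π*t0))) * myexp (((((j:ℝ)-(l:ℝ)))*(2*π*Q))*x) := by
      funext x
      unfold gfun
      rw [← myexp_add]
      congr 1
      ring
    have hmatch : (fun x : ℝ => myexp (((((j:ℝ)-(l:ℝ)))*(2*π*Q))*x))
        = fun x : ℝ => Complex.exp (-(2 * π * ξ * x) * Complex.I) := by
      funext x
      unfold myexp
      congr 1
      rw [hξdef]
      push_cast
      ring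
    have habs : ‖∫ x, gfun Q t0 j l x ∂μ‖
        = ‖∫ x, Complex.exp (-(2 * π * ξ * x) * Complex.I) ∂μ‖ := by
      rw [hsplitg, integral_const_mul, norm_mul, myexp_abs, one_mul, hmatch]
    rw [habs]
    have hdec := hdecay ξ hξ0
    have hξabs : |ξ| = |(j:ℝ)-(l:ℝ)| * Q := by
      rw [hξdef, abs_neg, abs_mul, abs_of_pos hQpos]
    have hQle : Q ≤ |ξ| := by
      rw [hξabs]
      nlinarith
    have hrle : |ξ| ^ (-(β/2)) ≤ Q ^ (-(β/2)) := rpow_anti hQpos hQle (by linarith)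
    calc ‖∫ x, Complex.exp (-(2 * π * ξ * x) * Complex.I) ∂μ‖
        ≤ C * |ξ| ^ (-(β/2)) := hdec
      _ ≤ C * Q ^ (-(β/2)) := mul_le_mul_of_nonneg_left hrle hC0
      _ = E0 := by rw [hE0]
  have hRe1 : (nn:ℝ)*M - (nn:ℝ)^2*E0
      ≤ (∫ x, Sfun Q t0 nn x * (starRingEnd ℂ) (Sfun Q t0 nn x) ∂μ).re := by
    rw [hJ, Complex.re_sum]
    have hterm : ∀ j ∈ Finset.range nn, ∀ l ∈ Finset.range nn,
        ((if j = l then M + E0 else 0) - E0) ≤ (∫ x, gfun Q t0 j l x ∂μ).re := by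
      intro j _ l _
      by_cases hjl : j = l
      · subst hjl
        rw [hdiag j, Complex.ofReal_re]
        simp
      · simp only [hjl, if_false]
        have h1 := Complex.abs_re_le_norm (∫ x, gfun Q t0 j l x ∂μ)
        have h2 := hoff j l hjl
        have h3 := (abs_le.mp (le_trans h1 h2)).1
        linarith
    have hsum : ∀ j ∈ Finset.range nn,
        (M + E0) - (nn:ℝ)*E0 ≤ ∑ l ∈ Finset.range nn, (∫ x, gfun Q t0 j l x ∂μ).re := by
      intro j hj
      calc (M + E0) - (nn:ℝ)*E0
          = ∑ l ∈ Finset.range nn, ((if j = l then M + E0 else 0) - E0) := by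
            rw [Finset.sum_sub_distrib, Finset.sum_ite_eq, if_pos hj, Finset.sum_const,
              Finset.card_range]
            simp [nsmul_eq_mul]
        _ ≤ ∑ l ∈ Finset.range nn, (∫ x, gfun Q t0 j l x ∂μ).re :=
            Finset.sum_le_sum (hterm j hj)
    calc (nn:ℝ)*M - (nn:ℝ)^2*E0 ≤ (nn:ℝ)*((M + E0) - (nn:ℝ)*E0) := by nlinarith
      _ = ∑ _j ∈ Finset.range nn, ((M + E0) - (nn:ℝ)*E0) := by
          rw [Finset.sum_const, Finset.card_range, nsmul_eq_mul]
      _ ≤ ∑ j ∈ Finset.range nn, (∑ l ∈ Finset.range nn, ∫ x, gfun Q t0 j l x ∂μ).re := by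
          apply Finset.sum_le_sum
          intro j hj
          rw [Complex.re_sum]
          exact hsum j hj
  have hint1 : Integrable (fun x => Complex.normSq (Sfun Q t0 nn x)) μ := by
    refine Integrable.mono' (integrable_const ((nn:ℝ)^2)) ?_ ?_
    · exact (Complex.continuous_normSq.comp (Sfun_cont Q t0 nn)).aestronglyMeasurable
    · refine Filter.Eventually.of_forall fun x => ?_
      rw [Real.norm_eq_abs, abs_of_nonneg (Complex.normSq_nonneg _), ← Complex.sq_norm]
      have h1 := Sfun_abs_le Q t0 nn x
      nlinarith [norm_nonneg (Sfun Q t0 nn x), Nat.cast_nonneg (α := ℝ) nn]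
  have hRe2 : (∫ x, Sfun Q t0 nn x * (starRingEnd ℂ) (Sfun Q t0 nn x) ∂μ).re
      ≤ (1/(Real.cos (π*c))^2)^2 * M := by
    have hconjeq : (fun x => Sfun Q t0 nn x * (starRingEnd ℂ) (Sfun Q t0 nn x))
        = fun x => ((Complex.normSq (Sfun Q t0 nn x) : ℝ) : ℂ) := by
      funext x
      exact Complex.mul_conj _
    rw [hconjeq]
    rw [show (∫ x, ((Complex.normSq (Sfun Q t0 nn x) : ℝ) : ℂ) ∂μ)
        = (((∫ x, Complex.normSq (Sfun Q t0 nn x) ∂μ : ℝ)) : ℂ) from integral_ofReal,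
      Complex.ofReal_re]
    have hboundae : ∀ᵐ x ∂μ, Complex.normSq (Sfun Q t0 nn x) ≤ (1/(Real.cos (π*c))^2)^2 := by
      filter_upwards [htail] with x hx
      obtain ⟨A, τ, hQx, hτ0, hτle⟩ := hx
      have hSx : Sfun Q t0 nn x = ∑ j ∈ Finset.range nn, myexp (2*π*(((A:ℝ)+τ) - (c+1/2))) ^ j := by
        unfold Sfun
        refine Finset.sum_congr rfl fun j _ => ?_
        congr 2
        rw [ht0, ← hQx]
        ring
      rw [← Complex.sq_norm, hSx]
      have hb1 := Sbound c hc0 hc A τ hτ0 hτle nn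
      apply pow_le_pow_left₀ (norm_nonneg _) hb1
    calc ∫ x, Complex.normSq (Sfun Q t0 nn x) ∂μ ≤ ∫ _x, (1/(Real.cos (π*c))^2)^2 ∂μ :=
          integral_mono_ae hint1 (integrable_const _) hboundae
      _ = (1/(Real.cos (π*c))^2)^2 * M := by rw [integral_const, hM, smul_eq_mul, mul_comm, measureReal_def]
  have hfin2 := le_trans hRe1 hRe2
  rw [hE0] at hfin2
  linarith

open MeasureTheory Real Finset in
theorem moran_fourier_dimension_zero
    (N : ℕ → ℕ) (B : ℕ → Finset ℕ)
    (hN : ∀ j, 2 ≤ N j)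
    (hBne : ∀ j, (B j).Nonempty)
    (hB : ∀ j, B j ⊆ Finset.range (N j))
    (hc : (⨆ j : ℕ, ((B j).max' (hBne j) : ℝ) / (N j : ℝ)) < 1 / 2) :
    let E : Set ℝ := {x | ∃ b : ℕ → ℕ, (∀ j, b j ∈ B j) ∧
      x = ∑' j : ℕ, (b j : ℝ) / ∏ i ∈ Finset.range (j + 1), (N i : ℝ)}
    ¬ ∃ (μ : Measure ℝ) (β C : ℝ), IsFiniteMeasure μ ∧ μ ≠ 0 ∧ μ Eᶜ = 0 ∧
        0 < β ∧ ∀ ξ : ℝ, ξ ≠ 0 →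
          ‖∫ x, Complex.exp (-(2 * π * ξ * x) * Complex.I) ∂μ‖ ≤
            C * |ξ| ^ (-(β / 2)) := by
  intro E
  rintro ⟨μ, β, C, hfin, hμne, hsupp, hβ, hdecay⟩
  have hπ := Real.pi_pos
  set c : ℝ := ⨆ j : ℕ, ((B j).max' (hBne j) : ℝ) / (N j : ℝ) with hcdef
  have hNpos : ∀ j, (0:ℝ) < (N j : ℝ) := fun j => by
    have := hN j; positivity
  have hratio : ∀ j, ((B j).max' (hBne j) : ℝ) / (N j : ℝ) ≤ 1 := by
    intro j
    rw [div_le_one (hNpos j)]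
    have h1 := Finset.mem_range.mp (hB j ((B j).max'_mem (hBne j)))
    exact_mod_cast h1.le
  have hbdd : BddAbove (Set.range fun j : ℕ => ((B j).max' (hBne j) : ℝ) / (N j : ℝ)) := by
    refine ⟨1, ?_⟩
    rintro y ⟨j, rfl⟩
    exact hratio j
  have hub : ∀ j, ((B j).max' (hBne j) : ℝ) / (N j : ℝ) ≤ c := fun j => le_ciSup hbdd j
  have hc0 : 0 ≤ c := le_trans (by positivity) (hub 0)
  have hbc : ∀ j, ∀ b ∈ B j, (b : ℝ) ≤ c * N j := by
    intro j b hb'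
    have h1 : (b:ℝ) ≤ ((B j).max' (hBne j) : ℝ) := by exact_mod_cast (B j).le_max' b hb'
    have h2 := (div_le_iff₀ (hNpos j)).mp (hub j)
    linarith
  have hbN : ∀ j, ∀ b ∈ B j, b < N j := fun j b hb' => Finset.mem_range.mp (hB j hb')
  have hμpos : 0 < (μ Set.univ).toReal := by
    refine ENNReal.toReal_pos ?_ (measure_ne_top μ _)
    simpa [Measure.measure_univ_eq_zero] using hμne
  have haeE : ∀ᵐ x ∂μ, x ∈ E := by
    rw [MeasureTheory.ae_iff]
    exact hsupp
  have hC0 : 0 ≤ C := by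
    have h := hdecay 1 one_ne_zero
    have h2 : (0:ℝ) ≤ ‖∫ x, Complex.exp (-(2 * π * (1:ℝ) * x) * Complex.I) ∂μ‖ :=
      norm_nonneg _
    simpa using le_trans h2 h
  have hdpos : 0 < Real.cos (π * c) :=
    Real.cos_pos_of_mem_Ioo ⟨by nlinarith, by nlinarith⟩
  set M : ℝ := (μ Set.univ).toReal with hM
  set R : ℝ := (1/(Real.cos (π*c))^2)^2 with hR
  have hRpos : 0 < R := by positivity
  have key : ∀ nn k : ℕ,
      (nn:ℝ) * M ≤ R * M + (nn:ℝ)^2 * (C * ((Pd N k : ℕ):ℝ) ^ (-(β/2))) := by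
    intro nn k
    have hQ1 : (1:ℝ) ≤ ((Pd N k : ℕ):ℝ) := by
      have h1 := Pd_pos N hN k
      exact_mod_cast h1
    have htail : ∀ᵐ x ∂μ, ∃ A : ℤ, ∃ τ : ℝ,
        ((Pd N k : ℕ):ℝ) * x = (A:ℝ) + τ ∧ 0 ≤ τ ∧ τ ≤ 2*c := by
      filter_upwards [haeE] with x hx
      obtain ⟨b, hbmem, hxeq⟩ := hx
      obtain ⟨A, τ, hQx, hτ0, hτle⟩ := moran_tail N hN b c
        (fun j => hbc j (b j) (hbmem j)) (fun j => hbN j (b j) (hbmem j)) hc0 k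
      exact ⟨A, τ, by rw [hxeq]; exact hQx, hτ0, hτle⟩
    have h := key_ineq μ β C c hβ hC0 hc0 hc hdecay _ hQ1 htail nn
    rw [← hR, ← hM] at h
    exact h
  set nn : ℕ := ⌈R⌉₊ + 1 with hnn
  have hnnR : R < (nn:ℝ) := by
    calc R ≤ (⌈R⌉₊ : ℝ) := Nat.le_ceil _
      _ < (nn:ℝ) := by
          rw [hnn]
          exact_mod_cast Nat.lt_succ_self _
  have hε : 0 < ((nn:ℝ) - R) * M := mul_pos (by linarith) hμpos
  set q : ℝ := (2:ℝ) ^ (-(β/2)) with hq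
  have hq0 : 0 ≤ q := Real.rpow_nonneg (by norm_num) _
  have hq1 : q < 1 := Real.rpow_lt_one_of_one_lt_of_neg one_lt_two (by linarith)
  have hden : (0:ℝ) < (nn:ℝ)^2*C + 1 := by positivity
  obtain ⟨n, hn⟩ := exists_pow_lt_of_lt_one (div_pos hε hden) hq1
  have hkey := key nn n
  have hPle : ((Pd N n : ℕ):ℝ) ^ (-(β/2)) ≤ q^(n+1) := by
    have h2 : ((2:ℝ))^(n+1) ≤ ((Pd N n : ℕ):ℝ) := by exact_mod_cast Pd_two N hN n
    calc ((Pd N n:ℕ):ℝ)^(-(β/2)) ≤ ((2:ℝ)^(n+1))^(-(β/2)) :=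
          rpow_anti (by positivity) h2 (by linarith)
      _ = q^(n+1) := by
          rw [← Real.rpow_natCast ((2:ℝ)) (n+1), ← Real.rpow_mul (by norm_num),
            mul_comm, Real.rpow_mul (by norm_num), Real.rpow_natCast]
  have hq2 : q^(n+1) ≤ q^n := by
    rw [pow_succ]
    nlinarith [pow_nonneg hq0 n]
  have hfinal : (nn:ℝ)^2 * (C * ((Pd N n : ℕ):ℝ) ^ (-(β/2))) < ((nn:ℝ) - R) * M := by
    calc (nn:ℝ)^2 * (C * ((Pd N n : ℕ):ℝ) ^ (-(β/2)))
        ≤ (nn:ℝ)^2 * C * q^(n+1) := by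
          rw [← mul_assoc]
          apply mul_le_mul_of_nonneg_left hPle (by positivity)
      _ ≤ ((nn:ℝ)^2*C + 1) * q^n := by nlinarith [pow_nonneg hq0 n, pow_nonneg hq0 (n+1)]
      _ < ((nn:ℝ)^2*C + 1) * (((nn:ℝ) - R) * M / ((nn:ℝ)^2*C + 1)) := by
          apply mul_lt_mul_of_pos_left hn hden
      _ = ((nn:ℝ) - R) * M := by field_simp
  linarith
end
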